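/- Rank of the Burer–Monteiro Jacobian: let X be a real d×r matrix of rank ρ (Matrix.rank X = ρ). Then the real-linear map Φ from d×r matrices to d×d matrices given by Φ(D) := D·Xᵀ + X·Dᵀ has range of dimension d·ρ − ρ·(ρ − 1)/2, i.e., finrank of the range of Φ equals d·ρ − ρ·(ρ−1)/2. -/

import Mathlib

open Matrix Module

/-- Matrices whose rows all lie in `V`. -/
def rowIn (d : ℕ) (V : Submodule ℝ (Fin d → ℝ)) : Submodule ℝ (Matrix (Fin d) (Fin d) ℝ) where
  carrier := {M | ∀ i, M i ∈ V}
  add_mem' := fun hA hB i => V.add_mem (hA i) (hB i)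
  zero_mem' := fun i => V.zero_mem
  smul_mem' := fun c M hM i => V.smul_mem c (hM i)

noncomputable def rowInEquiv (d : ℕ) (V : Submodule ℝ (Fin d → ℝ)) :
    ↥(rowIn d V) ≃ₗ[ℝ] (Fin d → V) where
  toFun M := fun i => ⟨M.1 i, M.2 i⟩
  invFun f := ⟨Matrix.of fun i j => (f i : Fin d → ℝ) j, fun i => by
    exact (f i).2⟩
  map_add' := fun A B => rfl
  map_smul' := fun c A => rfl
  left_inv := fun M => rfl
  right_inv := fun f => rfl

theorem finrank_rowIn (d : ℕ) (V : Submodule ℝ (Fin d → ℝ)) :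
    finrank ℝ ↥(rowIn d V) = d * finrank ℝ V := by
  rw [(rowInEquiv d V).finrank_eq, Module.finrank_pi_fintype,
    Finset.sum_const, Finset.card_univ, Fintype.card_fin, smul_eq_mul]

def skewSub (n : ℕ) : Submodule ℝ (Matrix (Fin n) (Fin n) ℝ) where
  carrier := {A | Aᵀ = -A}
  add_mem' := fun {A B} hA hB => by
    have hA' : Aᵀ = -A := hA
    have hB' : Bᵀ = -B := hB
    show (A + B)ᵀ = -(A + B)
    rw [transpose_add, hA', hB']; abel
  zero_mem' := by show (0 : Matrix (Fin n) (Fin n) ℝ)ᵀ = -0; simp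
  smul_mem' := fun c A hA => by
    have hA' : Aᵀ = -A := hA
    show (c • A)ᵀ = -(c • A)
    rw [transpose_smul, hA', smul_neg]

noncomputable def skewEquivFun (n : ℕ) :
    ↥(skewSub n) ≃ₗ[ℝ] ({p : Fin n × Fin n // p.1 < p.2} → ℝ) where
  toFun A := fun p => A.1 p.1.1 p.1.2
  invFun f := ⟨Matrix.of fun i j =>
      if h : i < j then f ⟨(i, j), h⟩ else if h' : j < i then -f ⟨(j, i), h'⟩ else 0, by
    ext i j
    by_cases h : i < j
    · have h2 : ¬ j < i := by omega
      simp [transpose_apply, h, h2]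
    · by_cases h' : j < i
      · simp [transpose_apply, h, h']
      · simp [transpose_apply, h, h']⟩
  map_add' := fun A B => rfl
  map_smul' := fun c A => rfl
  left_inv := fun A => by
    apply Subtype.ext
    ext i j
    have hA : A.1ᵀ = -A.1 := A.2
    by_cases h : i < j
    · simp [h]
    · by_cases h' : j < i
      · have : A.1 j i = -A.1 i j := by
          have := congrFun (congrFun hA i) j
          simpa [transpose_apply] using this
        simp [h, h', this]
      · have hij : i = j := by omega
        subst hij
        have : A.1 i i = -A.1 i i := by
          have := congrFun (congrFun hA i) i
          simpa [transpose_apply] using this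
        have h0 : A.1 i i = 0 := by linarith
        simp [h0]
  right_inv := fun f => by
    ext p
    have h := p.2
    simp [h]

def pairEquivSigma (n : ℕ) :
    {p : Fin n × Fin n // p.1 < p.2} ≃ (Σ j : Fin n, Fin j.1) where
  toFun p := ⟨p.1.2, ⟨p.1.1.1, p.2⟩⟩
  invFun x := ⟨(⟨x.2.1, lt_trans x.2.2 x.1.2⟩, x.1), x.2.2⟩
  left_inv p := by
    apply Subtype.ext
    ext <;> rfl
  right_inv x := by
    rcases x with ⟨j, k⟩
    rfl

theorem finrank_skewSub (n : ℕ) : finrank ℝ ↥(skewSub n) = n * (n - 1) / 2 := by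
  rw [(skewEquivFun n).finrank_eq, Module.finrank_pi,
    Fintype.card_congr (pairEquivSigma n), Fintype.card_sigma]
  simp only [Fintype.card_fin]
  rw [Fin.sum_univ_eq_sum_range (fun i => i) n, Finset.sum_range_id]

-- generic row formula: row i of N * Yᵀ is Y.mulVec (N i)
theorem row_mul_transpose {d m k : ℕ} (N : Matrix (Fin d) (Fin k) ℝ)
    (Y : Matrix (Fin m) (Fin k) ℝ) (i : Fin d) :
    (N * Yᵀ) i = Y.mulVec (N i) := by
  ext j
  simp [Matrix.mul_apply, Matrix.mulVec, dotProduct, transpose_apply, mul_comm]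

section P
variable {d ρ : ℕ} (V : Submodule ℝ (Fin d → ℝ)) (b : Basis (Fin ρ) ℝ V)

noncomputable def Pmat : Matrix (Fin d) (Fin ρ) ℝ :=
  Matrix.of fun i k => (b k : Fin d → ℝ) i

theorem Pmat_mulVec (c : Fin ρ → ℝ) :
    (Pmat V b).mulVec c = ((Finset.univ.sum fun k => c k • b k : V) : Fin d → ℝ) := by
  ext i
  simp [Pmat, Matrix.mulVec, dotProduct, Submodule.coe_sum, Finset.sum_apply, mul_comm]

theorem Pmat_mulVec_mem (c : Fin ρ → ℝ) : (Pmat V b).mulVec c ∈ V := by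
  rw [Pmat_mulVec]; exact Subtype.coe_prop _

theorem Pmat_mulVec_surj {v : Fin d → ℝ} (hv : v ∈ V) :
    ∃ c, (Pmat V b).mulVec c = v := by
  refine ⟨b.repr ⟨v, hv⟩, ?_⟩
  rw [Pmat_mulVec]
  exact congrArg _ (b.sum_repr ⟨v, hv⟩)

theorem Pmat_mulVec_inj {c : Fin ρ → ℝ} (hc : (Pmat V b).mulVec c = 0) : c = 0 := by
  rw [Pmat_mulVec] at hc
  have h0 : (Finset.univ.sum fun k => c k • b k : V) = 0 := by
    exact_mod_cast Subtype.ext hc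
  have := (Fintype.linearIndependent_iff.mp b.linearIndependent) c h0
  funext k; exact this k

theorem Pmat_ker : LinearMap.ker (Matrix.toLin' (Pmat V b)) = ⊥ := by
  rw [LinearMap.ker_eq_bot']
  intro c hc
  exact Pmat_mulVec_inj V b (by simpa [Matrix.toLin'_apply] using hc)

theorem Pmat_left_cancel {m : ℕ} {N N' : Matrix (Fin ρ) (Fin m) ℝ}
    (h : Pmat V b * N = Pmat V b * N') : N = N' := by
  ext k j
  have hcols : (Pmat V b).mulVec (fun s => N s j) = (Pmat V b).mulVec (fun s => N' s j) := by
    ext i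
    have := congrFun (congrFun h i) j
    simpa [Matrix.mul_apply, Matrix.mulVec, dotProduct] using this
  have : (Pmat V b).mulVec ((fun s => N s j) - (fun s => N' s j)) = 0 := by
    rw [Matrix.mulVec_sub, hcols, sub_self]
  have h2 := congrFun (Pmat_mulVec_inj V b this) k
  simp only [Pi.sub_apply, Pi.zero_apply] at h2
  linarith

/-- exists a left inverse matrix -/
theorem Pmat_exists_leftInv : ∃ L : Matrix (Fin ρ) (Fin d) ℝ, L * Pmat V b = 1 := by
  obtain ⟨g, hg⟩ := LinearMap.exists_leftInverse_of_injective _ (Pmat_ker V b)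
  refine ⟨LinearMap.toMatrix' g, ?_⟩
  have := congrArg LinearMap.toMatrix' hg
  rwa [LinearMap.toMatrix'_comp, LinearMap.toMatrix'_toLin', LinearMap.toMatrix'_id] at this

/-- columns in V gives factorization M = P * C -/
theorem Pmat_col_factor {M : Matrix (Fin d) (Fin d) ℝ} (h : ∀ j, Mᵀ j ∈ V) :
    ∃ C : Matrix (Fin ρ) (Fin d) ℝ, M = Pmat V b * C := by
  choose c hc using fun j => Pmat_mulVec_surj V b (h j)
  refine ⟨Matrix.of fun k j => c j k, ?_⟩
  ext i j
  have := congrFun (hc j) i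
  simpa [Matrix.mul_apply, Matrix.mulVec, dotProduct, transpose_apply] using this.symm

theorem Pmat_row_factor {M : Matrix (Fin d) (Fin d) ℝ} (h : ∀ i, M i ∈ V) :
    ∃ B : Matrix (Fin d) (Fin ρ) ℝ, M = B * (Pmat V b)ᵀ := by
  obtain ⟨C, hC⟩ := Pmat_col_factor V b (M := Mᵀ) (by simpa using h)
  exact ⟨Cᵀ, by rw [← transpose_transpose M, hC, transpose_mul]⟩
end P

section Main
variable {d ρ : ℕ} (V : Submodule ℝ (Fin d → ℝ)) (b : Basis (Fin ρ) ℝ V)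
  (L : Matrix (Fin ρ) (Fin d) ℝ)

theorem mem_skewSub {n : ℕ} {A : Matrix (Fin n) (Fin n) ℝ} : A ∈ skewSub n ↔ Aᵀ = -A :=
  Iff.rfl

theorem mem_rowIn {d : ℕ} {V : Submodule ℝ (Fin d → ℝ)} {M : Matrix (Fin d) (Fin d) ℝ} :
    M ∈ rowIn d V ↔ ∀ i, M i ∈ V := Iff.rfl

theorem projL (hL : L * Pmat V b = 1) {M : Matrix (Fin d) (Fin d) ℝ}
    (h : ∀ j, Mᵀ j ∈ V) : Pmat V b * (L * M) = M := by
  obtain ⟨C, hC⟩ := Pmat_col_factor V b h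
  rw [hC, ← Matrix.mul_assoc L, hL, Matrix.one_mul]

theorem projR (hL : L * Pmat V b = 1) {M : Matrix (Fin d) (Fin d) ℝ}
    (h : ∀ i, M i ∈ V) : M * Lᵀ * (Pmat V b)ᵀ = M := by
  obtain ⟨B, hB⟩ := Pmat_row_factor V b h
  rw [hB, Matrix.mul_assoc B, Matrix.mul_assoc B, ← Matrix.transpose_mul, hL, transpose_one,
    Matrix.one_mul]

noncomputable def mainEquiv (hL : L * Pmat V b = 1) :
    ↥(skewSub ρ) ≃ₗ[ℝ] ↥(skewSub d ⊓ rowIn d V) where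
  toFun A := ⟨Pmat V b * A.1 * (Pmat V b)ᵀ, by
    have hA : A.1ᵀ = -A.1 := mem_skewSub.mp A.2
    refine Submodule.mem_inf.mpr ⟨mem_skewSub.mpr ?_, mem_rowIn.mpr fun i => ?_⟩
    · simp [Matrix.transpose_mul, hA, Matrix.mul_neg, Matrix.neg_mul, Matrix.mul_assoc]
    · rw [row_mul_transpose]
      exact Pmat_mulVec_mem V b _⟩
  invFun M := ⟨L * M.1 * Lᵀ, by
    have hM : M.1ᵀ = -M.1 := mem_skewSub.mp (Submodule.mem_inf.mp M.2).1
    refine mem_skewSub.mpr ?_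
    simp [Matrix.transpose_mul, hM, Matrix.mul_neg, Matrix.neg_mul, Matrix.mul_assoc]⟩
  map_add' A B := by
    apply Subtype.ext
    show Pmat V b * (A.1 + B.1) * (Pmat V b)ᵀ = _
    rw [Matrix.mul_add, Matrix.add_mul]
    rfl
  map_smul' c A := by
    apply Subtype.ext
    show Pmat V b * (c • A.1) * (Pmat V b)ᵀ = _
    rw [Matrix.mul_smul, Matrix.smul_mul]
    rfl
  left_inv A := by
    apply Subtype.ext
    show L * (Pmat V b * A.1 * (Pmat V b)ᵀ) * Lᵀ = A.1
    calc L * (Pmat V b * A.1 * (Pmat V b)ᵀ) * Lᵀ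
        = (L * Pmat V b) * A.1 * ((L * Pmat V b)ᵀ) := by
          rw [Matrix.transpose_mul]; simp only [Matrix.mul_assoc]
      _ = A.1 := by rw [hL]; simp
  right_inv M := by
    apply Subtype.ext
    have hM : M.1ᵀ = -M.1 := mem_skewSub.mp (Submodule.mem_inf.mp M.2).1
    have hrows : ∀ i, M.1 i ∈ V := mem_rowIn.mp (Submodule.mem_inf.mp M.2).2
    have hcols : ∀ j, M.1ᵀ j ∈ V := by
      intro j
      rw [hM]
      exact V.neg_mem (hrows j)
    show Pmat V b * (L * M.1 * Lᵀ) * (Pmat V b)ᵀ = M.1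
    calc Pmat V b * (L * M.1 * Lᵀ) * (Pmat V b)ᵀ
        = (Pmat V b * (L * M.1)) * Lᵀ * (Pmat V b)ᵀ := by simp only [Matrix.mul_assoc]
      _ = M.1 * Lᵀ * (Pmat V b)ᵀ := by rw [projL V b L hL hcols]
      _ = M.1 := projR V b L hL hrows
end Main

/-- The Jacobian of the Burer–Monteiro map `F(X) = X·Xᵀ`, acting on a direction `D` by
`D ↦ D·Xᵀ + X·Dᵀ`. -/
def bmJacobian {d r : ℕ} (X : Matrix (Fin d) (Fin r) ℝ) :
    Matrix (Fin d) (Fin r) ℝ →ₗ[ℝ] Matrix (Fin d) (Fin d) ℝ where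
  toFun D := D * Xᵀ + X * Dᵀ
  map_add' D₁ D₂ := by
    simp only [Matrix.transpose_add, Matrix.add_mul, Matrix.mul_add]
    abel
  map_smul' c D := by
    simp only [Matrix.transpose_smul, Matrix.smul_mul, Matrix.mul_smul, RingHom.id_apply,
      smul_add]

/-- Rank of the Burer–Monteiro Jacobian: if `X` has rank `ρ`, the range of
`D ↦ D·Xᵀ + X·Dᵀ` has dimension `d·ρ − ρ·(ρ − 1)/2`. -/
theorem bmJacobian_rank {d r : ℕ} (X : Matrix (Fin d) (Fin r) ℝ) (ρ : ℕ)
    (hX : X.rank = ρ) :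
    Module.finrank ℝ (LinearMap.range (bmJacobian X)) = d * ρ - ρ * (ρ - 1) / 2 := by
  classical
  set V : Submodule ℝ (Fin d → ℝ) := LinearMap.range X.mulVecLin with hVdef
  have hV : finrank ℝ ↥V = ρ := hX
  have b : Basis (Fin ρ) ℝ V := Module.finBasisOfFinrankEq ℝ V hV
  obtain ⟨L, hL⟩ := Pmat_exists_leftInv V b
  -- the map D ↦ D * Xᵀ
  let ψ : Matrix (Fin d) (Fin r) ℝ →ₗ[ℝ] Matrix (Fin d) (Fin d) ℝ :=
    { toFun := fun D => D * Xᵀ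
      map_add' := fun D₁ D₂ => Matrix.add_mul D₁ D₂ Xᵀ
      map_smul' := fun c D => Matrix.smul_mul c D Xᵀ }
  -- symmetrization
  let Lsym : Matrix (Fin d) (Fin d) ℝ →ₗ[ℝ] Matrix (Fin d) (Fin d) ℝ :=
    { toFun := fun M => M + Mᵀ
      map_add' := fun M N => by
        simp only [Matrix.transpose_add]; abel
      map_smul' := fun c M => by
        simp only [Matrix.transpose_smul, RingHom.id_apply, smul_add] }
  have hcomp : bmJacobian X = Lsym ∘ₗ ψ := by
    apply LinearMap.ext
    intro D
    show D * Xᵀ + X * Dᵀ = (D * Xᵀ) + (D * Xᵀ)ᵀ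
    rw [Matrix.transpose_mul, Matrix.transpose_transpose]
  have hψrange : LinearMap.range ψ = rowIn d V := by
    ext M
    constructor
    · rintro ⟨D, rfl⟩
      refine mem_rowIn.mpr fun i => ?_
      show (D * Xᵀ) i ∈ V
      rw [row_mul_transpose]
      exact ⟨D i, rfl⟩
    · intro hM
      choose D hD using fun i => (mem_rowIn.mp hM) i
      refine ⟨Matrix.of fun i => D i, ?_⟩
      show (Matrix.of fun i => D i) * Xᵀ = M
      funext i
      rw [row_mul_transpose]
      exact hD i
  set U : Submodule ℝ (Matrix (Fin d) (Fin d) ℝ) := rowIn d V with hUdef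
  let f := Lsym.comp U.subtype
  have hr : LinearMap.range f = LinearMap.range (bmJacobian X) := by
    rw [hcomp, LinearMap.range_comp, LinearMap.range_comp, Submodule.range_subtype, hψrange]
  have hker : LinearMap.ker f = Submodule.comap U.subtype (skewSub d ⊓ U) := by
    ext x
    simp only [LinearMap.mem_ker, Submodule.mem_comap, Submodule.mem_inf]
    constructor
    · intro h
      refine ⟨mem_skewSub.mpr ?_, x.2⟩
      have h' : x.1 + x.1ᵀ = 0 := h
      exact eq_neg_of_add_eq_zero_right h'
    · rintro ⟨h1, _⟩
      show x.1 + x.1ᵀ = 0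
      have h1' : (x.1)ᵀ = -x.1 := h1
      rw [h1']
      simp
  have e1 : finrank ℝ ↥(LinearMap.ker f) = finrank ℝ ↥(skewSub d ⊓ U) := by
    rw [hker]
    exact (Submodule.comapSubtypeEquivOfLe inf_le_right).finrank_eq
  have e2 : finrank ℝ ↥(skewSub d ⊓ U) = ρ * (ρ - 1) / 2 := by
    rw [← (mainEquiv V b L hL).finrank_eq]
    exact finrank_skewSub ρ
  have hU : finrank ℝ ↥U = d * ρ := by
    rw [hUdef, finrank_rowIn, hV]
  have rn := LinearMap.finrank_range_add_finrank_ker f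
  rw [hr, e1, e2, hU] at rn
  have hle : ρ * (ρ - 1) / 2 ≤ d * ρ := by
    have h1 : ρ ≤ d := by
      rw [← hX]
      exact (Matrix.rank_le_height X)
    calc ρ * (ρ - 1) / 2 ≤ ρ * (ρ - 1) := Nat.div_le_self _ _
      _ ≤ ρ * d := Nat.mul_le_mul_left ρ (le_trans (Nat.sub_le ρ 1) h1)
      _ = d * ρ := Nat.mul_comm ρ d
  omega
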